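/- Orthant square-root trick for oriented structures: for all positive integers $n,N,t$ and $L\ge n$, $\mathbb{P}(|{}_L\eta_{1,t}^{[-n,n]^d,\mathbb{Z}^d\setminus[-n,n]^d}\cap[0,L)^d|\le N)^{2^d}\le \mathbb{P}(|{}_L\eta_{1,t}^{[-n,n]^d,\mathbb{Z}^d\setminus[-n,n]^d}|\le N2^d)$. -/

import Mathlib

open MeasureTheory ProbabilityTheory Filter
open scoped ENNReal

/-- Driving randomness for one time step of the competition model:
`o1` = openness of type-1 edges (prob. `p`), `o2` = openness of type-2 edges (prob. `q`),
`o3` = immigration of type-2 particles (prob. `α`). -/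
structure CompStep (d : ℕ) where
  o1 : (Fin d → ℤ) → (Fin d → ℤ) → Bool
  o2 : (Fin d → ℤ) → (Fin d → ℤ) → Bool
  o3 : (Fin d → ℤ) → Bool

instance {d : ℕ} : MeasurableSpace (CompStep d) :=
  MeasurableSpace.comap (fun c => (c.o1, c.o2, c.o3)) inferInstance

/-- `ℓ¹`-neighbours (including the site itself). -/
def nbr {d : ℕ} (x y : Fin d → ℤ) : Prop := (∑ i, |x i - y i|) ≤ 1

/-- The competition model: `(compEta d w A B n).1` is the set of type-1 sites (bacteria)
and `(compEta d w A B n).2` the set of type-2 sites (immune cells) at time `n`, started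
from 1's on `A` and 2's on `B`; each particle spreads along its open edges, type 2 wins
conflicts, and immigration then creates new 2's. -/
def compEta (d : ℕ) (w : ℕ → CompStep d) (A B : Set (Fin d → ℤ)) :
    ℕ → Set (Fin d → ℤ) × Set (Fin d → ℤ)
  | 0 => (A, B)
  | n + 1 =>
      let prev := compEta d w A B n
      let two : Set (Fin d → ℤ) :=
        {k | (w (n + 1)).o3 k = true ∨ ∃ i ∈ prev.2, nbr i k ∧ (w (n + 1)).o2 i k = true}
      ({k | k ∉ two ∧ ∃ i ∈ prev.1, nbr i k ∧ (w (n + 1)).o1 i k = true}, two)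

/-- The truncated competition model `_Lη`: all sites outside `(-L,L)^d` are forced to be
in state 2 at all times. -/
def compEtaTrunc (d : ℕ) (L : ℕ) (w : ℕ → CompStep d) (A B : Set (Fin d → ℤ)) :
    ℕ → Set (Fin d → ℤ) × Set (Fin d → ℤ)
  | 0 => (A \ {k | ∃ i, (L : ℤ) ≤ |k i|}, B ∪ {k | ∃ i, (L : ℤ) ≤ |k i|})
  | n + 1 =>
      let prev := compEtaTrunc d L w A B n
      let two : Set (Fin d → ℤ) :=
        {k | (w (n + 1)).o3 k = true ∨ ∃ i ∈ prev.2, nbr i k ∧ (w (n + 1)).o2 i k = true}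
          ∪ {k | ∃ i, (L : ℤ) ≤ |k i|}
      ({k | k ∉ two ∧ ∃ i ∈ prev.1, nbr i k ∧ (w (n + 1)).o1 i k = true}, two)

/-- Index type for the full family of driving Bernoulli variables. -/
abbrev CompIdx (d : ℕ) :=
  (ℕ × (Fin d → ℤ) × (Fin d → ℤ)) ⊕ (ℕ × (Fin d → ℤ) × (Fin d → ℤ)) ⊕ (ℕ × (Fin d → ℤ))

/-- The family of all driving Bernoulli variables of the competition model. -/
def compVar {Ω : Type*} {d : ℕ} (env : Ω → ℕ → CompStep d) :
    CompIdx d → Ω → Bool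
  | Sum.inl (n, x, y) => fun ω => (env ω n).o1 x y
  | Sum.inr (Sum.inl (n, x, y)) => fun ω => (env ω n).o2 x y
  | Sum.inr (Sum.inr (n, x)) => fun ω => (env ω n).o3 x

/-- The driving variables are independent Bernoulli variables with respective parameters
`p` (type-1 edges), `q` (type-2 edges) and `α` (immigration). -/
def CompLaw {Ω : Type*} [MeasurableSpace Ω] {d : ℕ} (μ : Measure Ω)
    (env : Ω → ℕ → CompStep d) (p q α : ℝ) : Prop :=
  iIndepFun (compVar env) μ ∧
    (∀ n x y, μ {ω | (env ω n).o1 x y = true} = ENNReal.ofReal p) ∧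
    (∀ n x y, μ {ω | (env ω n).o2 x y = true} = ENNReal.ofReal q) ∧
    (∀ n x, μ {ω | (env ω n).o3 x = true} = ENNReal.ofReal α)


noncomputable section SqrtTrick

variable {I : Type*} [DecidableEq I]

/-- indicator with values in ℝ≥0∞ -/
def ind (A : Set (I → Bool)) (x : I → Bool) : ℝ≥0∞ := open Classical in if x ∈ A then 1 else 0

/-- iterated "integration" of a functional of bits over the coordinates in a list -/
def ExL (w : I → Bool → ℝ≥0∞) : List I → ((I → Bool) → ℝ≥0∞) → (I → Bool) → ℝ≥0∞
  | [], f, b => f b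
  | a :: l, f, b =>
      w a false * ExL w l f (Function.update b a false)
        + w a true * ExL w l f (Function.update b a true)

variable {w : I → Bool → ℝ≥0∞}

lemma ExL_congr {u : Set I} {f : (I → Bool) → ℝ≥0∞}
    (hf : ∀ x y, (∀ i ∈ u, x i = y i) → f x = f y) :
    ∀ (l : List I) (b b' : I → Bool), (∀ i ∈ u, i ∉ l → b i = b' i) →
      ExL w l f b = ExL w l f b'
  | [], b, b', hb => hf _ _ fun i hi => hb i hi (by simp)
  | a :: l, b, b', hb => by
      have h : ∀ β : Bool, ∀ i ∈ u, i ∉ l →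
          Function.update b a β i = Function.update b' a β i := by
        intro β i hi hil
        rcases eq_or_ne i a with rfl | hia
        · simp
        · simp only [Function.update_of_ne hia]
          exact hb i hi (by simp [hil, hia])
      simp only [ExL, ExL_congr hf l _ _ (h false), ExL_congr hf l _ _ (h true)]

lemma ExL_perm {f : (I → Bool) → ℝ≥0∞} {l l' : List I} (hp : l.Perm l') :
    ∀ b, ExL w l f b = ExL w l' f b := by
  induction hp with
  | nil => intro b; rfl
  | cons a _ ih => intro b; simp only [ExL, ih]
  | swap x y l => intro b
                  rcases eq_or_ne x y with rfl | hxy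
                  · rfl
                  · simp only [ExL]
                    rw [Function.update_comm hxy, Function.update_comm hxy,
                       Function.update_comm hxy, Function.update_comm hxy]
                    ring
  | trans _ _ ih1 ih2 => intro b; rw [ih1, ih2]

/-- coordinatewise order twisted by polarity `ε` -/
def Rle (ε : I → Bool) (x y : I → Bool) : Prop := ∀ i, (xor (x i) (ε i)) ≤ (xor (y i) (ε i))

lemma Rle.update {ε : I → Bool} {x y : I → Bool} (h : Rle ε x y) (a : I) (β : Bool) :
    Rle ε (Function.update x a β) (Function.update y a β) := by
  intro i
  rcases eq_or_ne i a with rfl | hia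
  · simp
  · simp only [Function.update_of_ne hia]; exact h i

lemma Rle.update_le {ε : I → Bool} (b : I → Bool) (a : I) (hε : ε a = false) :
    Rle ε (Function.update b a false) (Function.update b a true) := by
  intro i
  rcases eq_or_ne i a with rfl | hia
  · simp [hε]
  · simp only [Function.update_of_ne hia]; exact le_refl _

lemma Rle.update_ge {ε : I → Bool} (b : I → Bool) (a : I) (hε : ε a = true) :
    Rle ε (Function.update b a true) (Function.update b a false) := by
  intro i
  rcases eq_or_ne i a with rfl | hia
  · simp [hε]
  · simp only [Function.update_of_ne hia]; exact le_refl _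

lemma ExL_anti {ε : I → Bool} {f : (I → Bool) → ℝ≥0∞}
    (hf : ∀ x y, Rle ε x y → f y ≤ f x) :
    ∀ (l : List I) (x y : I → Bool), Rle ε x y → ExL w l f y ≤ ExL w l f x
  | [], x, y, h => hf x y h
  | a :: l, x, y, h => by
      simp only [ExL]
      gcongr <;> exact ExL_anti hf l _ _ (h.update a _)

lemma cheb_aux {p q a1 a2 b1 b2 : ℝ≥0∞} (hpq : p + q = 1) (ha : a1 ≤ a2) (hb : b1 ≤ b2) :
    (p * a1 + q * a2) * (p * b1 + q * b2) ≤ p * (a1 * b1) + q * (a2 * b2) := by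
  have hq1 : q ≤ 1 := hpq ▸ le_add_self
  obtain ⟨α, rfl⟩ : ∃ α, a2 = a1 + α := ⟨a2 - a1, (add_tsub_cancel_of_le ha).symm⟩
  obtain ⟨β, rfl⟩ : ∃ β, b2 = b1 + β := ⟨b2 - b1, (add_tsub_cancel_of_le hb).symm⟩
  have e1 : p * a1 + q * (a1 + α) = a1 + q * α := by
    calc p * a1 + q * (a1 + α) = (p + q) * a1 + q * α := by ring
    _ = a1 + q * α := by rw [hpq, one_mul]
  have e2 : p * b1 + q * (b1 + β) = b1 + q * β := by
    calc p * b1 + q * (b1 + β) = (p + q) * b1 + q * β := by ring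
    _ = b1 + q * β := by rw [hpq, one_mul]
  have e3 : p * (a1 * b1) + q * ((a1 + α) * (b1 + β))
      = a1 * b1 + (q * (a1 * β) + q * (α * b1) + q * (α * β)) := by
    calc p * (a1 * b1) + q * ((a1 + α) * (b1 + β))
        = (p + q) * (a1 * b1) + (q * (a1 * β) + q * (α * b1) + q * (α * β)) := by ring
    _ = _ := by rw [hpq, one_mul]
  rw [e1, e2, e3]
  calc (a1 + q * α) * (b1 + q * β)
      = a1 * b1 + (q * (a1 * β) + q * (α * b1) + q * q * (α * β)) := by ring
  _ ≤ a1 * b1 + (q * (a1 * β) + q * (α * b1) + q * (α * β)) := by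
      gcongr
      exact mul_le_of_le_one_left' hq1
  _ = _ := rfl

lemma cheb {p q a1 a2 b1 b2 : ℝ≥0∞} (hpq : p + q = 1)
    (hab : (a1 ≤ a2 ∧ b1 ≤ b2) ∨ (a2 ≤ a1 ∧ b2 ≤ b1)) :
    (p * a1 + q * a2) * (p * b1 + q * b2) ≤ p * (a1 * b1) + q * (a2 * b2) := by
  rcases hab with ⟨ha, hb⟩ | ⟨ha, hb⟩
  · exact cheb_aux hpq ha hb
  · have := cheb_aux (p := q) (q := p) (by rw [add_comm]; exact hpq) ha hb
    calc (p * a1 + q * a2) * (p * b1 + q * b2)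
        = (q * a2 + p * a1) * (q * b2 + p * b1) := by ring
    _ ≤ q * (a2 * b2) + p * (a1 * b1) := this
    _ = _ := by ring

lemma ExL_harris {ε : I → Bool} (hw : ∀ i, w i false + w i true = 1)
    {f g : (I → Bool) → ℝ≥0∞}
    (hf : ∀ x y, Rle ε x y → f y ≤ f x) (hg : ∀ x y, Rle ε x y → g y ≤ g x) :
    ∀ (l : List I) (b : I → Bool),
      ExL w l f b * ExL w l g b ≤ ExL w l (fun x => f x * g x) b
  | [], b => le_refl _
  | a :: l, b => by
      simp only [ExL]
      have key : ∀ β : Bool,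
          ExL w l f (Function.update b a β) * ExL w l g (Function.update b a β)
            ≤ ExL w l (fun x => f x * g x) (Function.update b a β) :=
        fun β => ExL_harris hw hf hg l _
      refine le_trans (cheb (hw a) ?_) ?_
      · rcases Bool.eq_false_or_eq_true (ε a) with hε | hε
        · exact Or.inl ⟨ExL_anti hf l _ _ (Rle.update_ge b a hε),
            ExL_anti hg l _ _ (Rle.update_ge b a hε)⟩
        · exact Or.inr ⟨ExL_anti hf l _ _ (Rle.update_le b a hε),
            ExL_anti hg l _ _ (Rle.update_le b a hε)⟩
      · gcongr
        · exact key false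
        · exact key true

lemma ExL_const (hw : ∀ i, w i false + w i true = 1) (c : ℝ≥0∞) :
    ∀ (l : List I) (b : I → Bool), ExL w l (fun _ => c) b = c
  | [], b => rfl
  | a :: l, b => by
      simp only [ExL, ExL_const hw c l]
      rw [← add_mul, hw a, one_mul]

lemma ExL_harris_prod {κ : Type*} {ε : I → Bool} (hw : ∀ i, w i false + w i true = 1)
    (u : Finset κ) (F : κ → (I → Bool) → ℝ≥0∞)
    (hF : ∀ j, ∀ x y, Rle ε x y → F j y ≤ F j x) (l : List I) (b : I → Bool) :
    (∏ j ∈ u, ExL w l (F j) b) ≤ ExL w l (fun x => ∏ j ∈ u, F j x) b := by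
  classical
  induction u using Finset.induction_on with
  | empty => simp only [Finset.prod_empty]; rw [ExL_const hw 1 l b]
  | insert a u ha ih =>
      rw [Finset.prod_insert ha]
      have hrest : ∀ x y, Rle ε x y → (∏ j ∈ u, F j y) ≤ ∏ j ∈ u, F j x :=
        fun x y h => Finset.prod_le_prod' fun j _ => hF j x y h
      calc ExL w l (F a) b * ∏ j ∈ u, ExL w l (F j) b
          ≤ ExL w l (F a) b * ExL w l (fun x => ∏ j ∈ u, F j x) b := by gcongr
      _ ≤ ExL w l (fun x => F a x * ∏ j ∈ u, F j x) b := ExL_harris hw (hF a) hrest l b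
      _ = ExL w l (fun x => ∏ j ∈ insert a u, F j x) b := by
          simp only [Finset.prod_insert ha]

lemma update_comp_involutive {σ : I → I} (hσ : Function.Involutive σ)
    (b : I → Bool) (a : I) (β : Bool) :
    (Function.update b a β) ∘ σ = Function.update (b ∘ σ) (σ a) β := by
  funext j
  rcases eq_or_ne j (σ a) with rfl | hj
  · simp only [Function.comp_apply]
    rw [show σ (σ a) = a from hσ a, Function.update_self, Function.update_self]
  · have hja : σ j ≠ a := fun h => hj (by rw [← h, hσ j])
    simp only [Function.comp_apply, Function.update_of_ne hj, Function.update_of_ne hja,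
      Function.comp_apply]

lemma ExL_reindex {σ : I → I} (hσ : Function.Involutive σ) (f : (I → Bool) → ℝ≥0∞) :
    ∀ (l : List I) (b : I → Bool),
      ExL w l (fun x => f (x ∘ σ)) b = ExL (fun i => w (σ i)) (l.map σ) f (b ∘ σ)
  | [], b => rfl
  | a :: l, b => by
      simp only [ExL, List.map_cons, hσ a,
        ExL_reindex hσ f l (Function.update b a false),
        ExL_reindex hσ f l (Function.update b a true),
        update_comp_involutive hσ b a]

lemma ind_inter (A B : Set (I → Bool)) (x : I → Bool) :
    ind (A ∩ B) x = ind A x * ind B x := by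
  simp only [ind]
  by_cases hA : x ∈ A <;> by_cases hB : x ∈ B <;> simp [hA, hB, Set.mem_inter_iff]

lemma ind_biInter {κ : Type*} (u : Finset κ) (A : κ → Set (I → Bool)) (x : I → Bool) :
    ind (⋂ j ∈ u, A j) x = ∏ j ∈ u, ind (A j) x := by
  classical
  induction u using Finset.induction_on with
  | empty => simp [ind]
  | insert a u ha ih =>
      rw [Finset.set_biInter_insert, ind_inter, ih, Finset.prod_insert ha]

section Bridge

variable {Ω : Type*} [MeasurableSpace Ω] {μ : Measure Ω} [IsProbabilityMeasure μ]
  {X : I → Ω → Bool}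

lemma bridge (hX : ∀ i, Measurable (X i))
    (hcyl : ∀ (m : Finset I) (b : I → Bool),
      μ (⋂ i ∈ m, X i ⁻¹' {b i}) = ∏ i ∈ m, μ (X i ⁻¹' {b i})) :
    ∀ (l : List I), l.Nodup → ∀ (m : Finset I), (∀ i ∈ l, i ∉ m) →
    ∀ (A : Set (I → Bool)) (b : I → Bool),
    (∀ x y, (∀ i, (i ∈ l ∨ i ∈ m) → x i = y i) → (x ∈ A ↔ y ∈ A)) →
    μ ({ω | (fun i => X i ω) ∈ A} ∩ ⋂ i ∈ m, X i ⁻¹' {b i})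
      = ExL (fun i β => μ (X i ⁻¹' {β})) l (ind A) b * ∏ i ∈ m, μ (X i ⁻¹' {b i})
  | [], _, m, _, A, b, hA => by
      have hmem : ∀ ω, ω ∈ (⋂ i ∈ m, X i ⁻¹' {b i}) → ((fun i => X i ω) ∈ A ↔ b ∈ A) := by
        intro ω hω
        refine hA _ _ fun i hi => ?_
        rcases hi with hi | hi
        · exact absurd hi List.not_mem_nil
        · have := Set.mem_iInter₂.1 hω i hi
          simpa using this
      by_cases hbA : b ∈ A
      · have : {ω | (fun i => X i ω) ∈ A} ∩ ⋂ i ∈ m, X i ⁻¹' {b i}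
            = ⋂ i ∈ m, X i ⁻¹' {b i} := by
          apply Set.inter_eq_self_of_subset_right
          intro ω hω
          exact (hmem ω hω).2 hbA
        rw [this, hcyl m b]
        simp [ExL, ind, hbA]
      · have : {ω | (fun i => X i ω) ∈ A} ∩ ⋂ i ∈ m, X i ⁻¹' {b i} = ∅ := by
          ext ω
          simp only [Set.mem_inter_iff, Set.mem_setOf_eq, Set.mem_empty_iff_false, iff_false,
            not_and]
          intro hωA hω
          exact hbA ((hmem ω hω).1 hωA)
        rw [this]
        simp [ExL, ind, hbA]
  | a :: l, hnd, m, hdisj, A, b, hA => by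
      have ham : a ∉ m := hdisj a List.mem_cons_self
      have hT : MeasurableSet (X a ⁻¹' {true}) := (hX a) (measurableSet_singleton _)
      set Z := {ω | (fun i => X i ω) ∈ A} ∩ ⋂ i ∈ m, X i ⁻¹' {b i} with hZ
      have hdiff : Z \ (X a ⁻¹' {true}) = Z ∩ X a ⁻¹' {false} := by
        ext ω
        simp only [Set.mem_diff, Set.mem_inter_iff, Set.mem_preimage, Set.mem_singleton_iff,
          Bool.not_eq_true]
        all_goals tauto
      have hsplit : ∀ β : Bool, Z ∩ X a ⁻¹' {β}
          = {ω | (fun i => X i ω) ∈ A} ∩ ⋂ i ∈ insert a m, X i ⁻¹' {Function.update b a β i} := by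
        intro β
        rw [Finset.set_biInter_insert]
        have h1 : (⋂ i ∈ m, X i ⁻¹' {Function.update b a β i}) = ⋂ i ∈ m, X i ⁻¹' {b i} := by
          apply Set.iInter₂_congr
          intro i hi
          rw [Function.update_of_ne (fun h : i = a => ham (h ▸ hi))]
        rw [h1, Function.update_self, hZ]
        ext ω
        simp only [Set.mem_inter_iff, Set.mem_setOf_eq]
        tauto
      have hIH : ∀ β : Bool,
          μ (Z ∩ X a ⁻¹' {β})
            = ExL (fun i β => μ (X i ⁻¹' {β})) l (ind A) (Function.update b a β)
              * (μ (X a ⁻¹' {β}) * ∏ i ∈ m, μ (X i ⁻¹' {b i})) := by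
        intro β
        rw [hsplit β]
        rw [bridge hX hcyl l (List.nodup_cons.1 hnd).2 (insert a m)
          (fun i hi => by
            simp only [Finset.mem_insert, not_or]
            exact ⟨fun h => (List.nodup_cons.1 hnd).1 (h ▸ hi), hdisj i (List.mem_cons_of_mem a hi)⟩)
          A (Function.update b a β)
          (fun x y hxy => hA x y fun i hi => hxy i (by
            rcases hi with hi | hi
            · rcases List.mem_cons.1 hi with rfl | hi
              · exact Or.inr (Finset.mem_insert_self i m)
              · exact Or.inl hi
            · exact Or.inr (Finset.mem_insert_of_mem hi)))]
        rw [Finset.prod_insert ham, Function.update_self]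
        congr 2
        apply Finset.prod_congr rfl
        intro i hi
        rw [Function.update_of_ne (fun h : i = a => ham (h ▸ hi))]
      have hμZ : μ Z = μ (Z ∩ X a ⁻¹' {true}) + μ (Z ∩ X a ⁻¹' {false}) := by
        rw [← hdiff, measure_inter_add_diff Z hT]
      rw [hμZ, hIH true, hIH false]
      simp only [ExL]
      ring

end Bridge

end SqrtTrick


section Det
variable {d : ℕ} (L : ℕ) (w w' : ℕ → CompStep d) (A B : Set (Fin d → ℤ))

lemma trunc_succ (m : ℕ) : compEtaTrunc d L w A B (m+1) =
    ({k | k ∉ ({k | (w (m+1)).o3 k = true ∨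
            ∃ i ∈ (compEtaTrunc d L w A B m).2, nbr i k ∧ (w (m+1)).o2 i k = true}
          ∪ {k | ∃ i, (L : ℤ) ≤ |k i|}) ∧
        ∃ i ∈ (compEtaTrunc d L w A B m).1, nbr i k ∧ (w (m+1)).o1 i k = true},
     {k | (w (m+1)).o3 k = true ∨
            ∃ i ∈ (compEtaTrunc d L w A B m).2, nbr i k ∧ (w (m+1)).o2 i k = true}
          ∪ {k | ∃ i, (L : ℤ) ≤ |k i|}) := rfl

lemma out_sub_two : ∀ m, {k : Fin d → ℤ | ∃ i, (L : ℤ) ≤ |k i|} ⊆ (compEtaTrunc d L w A B m).2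
  | 0 => Set.subset_union_right
  | m+1 => Set.subset_union_right

lemma one_not_out : ∀ m, (compEtaTrunc d L w A B m).1 ∩ {k : Fin d → ℤ | ∃ i, (L : ℤ) ≤ |k i|} = ∅ := by
  intro m
  apply Set.eq_empty_of_forall_notMem
  rintro k ⟨hk1, hk2⟩
  cases m with
  | zero => exact hk1.2 hk2
  | succ m => exact hk1.1 (Or.inr hk2)

lemma nbr_abs_le {x y : Fin d → ℤ} (h : nbr x y) (j : Fin d) : |x j - y j| ≤ 1 :=
  le_trans (Finset.single_le_sum (f := fun i => |x i - y i|)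
    (fun i _ => abs_nonneg _) (Finset.mem_univ j)) h

lemma trunc_mono
    (h1 : ∀ m x y, (w m).o1 x y = true → (w' m).o1 x y = true)
    (h2 : ∀ m x y, (w' m).o2 x y = true → (w m).o2 x y = true)
    (h3 : ∀ m x, (w' m).o3 x = true → (w m).o3 x = true) :
    ∀ m, (compEtaTrunc d L w A B m).1 ⊆ (compEtaTrunc d L w' A B m).1 ∧
      (compEtaTrunc d L w' A B m).2 ⊆ (compEtaTrunc d L w A B m).2 := by
  intro m
  induction m with
  | zero => exact ⟨le_refl _, le_refl _⟩
  | succ m ih =>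
      rw [trunc_succ, trunc_succ]
      have sub2 : {k | (w' (m+1)).o3 k = true ∨
            ∃ i ∈ (compEtaTrunc d L w' A B m).2, nbr i k ∧ (w' (m+1)).o2 i k = true}
          ∪ {k : Fin d → ℤ | ∃ i, (L : ℤ) ≤ |k i|}
          ⊆ {k | (w (m+1)).o3 k = true ∨
            ∃ i ∈ (compEtaTrunc d L w A B m).2, nbr i k ∧ (w (m+1)).o2 i k = true}
          ∪ {k : Fin d → ℤ | ∃ i, (L : ℤ) ≤ |k i|} := by
        rintro k (hk | hk)
        · rcases hk with hk | ⟨i, hi, hnb, ho⟩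
          · exact Or.inl (Or.inl (h3 _ _ hk))
          · exact Or.inl (Or.inr ⟨i, ih.2 hi, hnb, h2 _ _ _ ho⟩)
        · exact Or.inr hk
      constructor
      · rintro k ⟨hk1, i, hi, hnb, ho⟩
        exact ⟨fun h => hk1 (sub2 h), i, ih.1 hi, hnb, h1 _ _ _ ho⟩
      · exact sub2

lemma trunc_equivar (g : (Fin d → ℤ) → (Fin d → ℤ))
    (hg : Function.Involutive g) (hnbr : ∀ x y, nbr (g x) (g y) ↔ nbr x y)
    (hA : g ⁻¹' A = A) (hB : g ⁻¹' B = B)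
    (hout : ∀ k : Fin d → ℤ, (∃ i, (L : ℤ) ≤ |g k i|) ↔ ∃ i, (L : ℤ) ≤ |k i|)
    (h1 : ∀ m x y, (w' m).o1 x y = (w m).o1 (g x) (g y))
    (h2 : ∀ m x y, (w' m).o2 x y = (w m).o2 (g x) (g y))
    (h3 : ∀ m x, (w' m).o3 x = (w m).o3 (g x)) :
    ∀ m, (compEtaTrunc d L w' A B m).1 = g ⁻¹' (compEtaTrunc d L w A B m).1 ∧
      (compEtaTrunc d L w' A B m).2 = g ⁻¹' (compEtaTrunc d L w A B m).2 := by
  have houtset : g ⁻¹' {k : Fin d → ℤ | ∃ i, (L : ℤ) ≤ |k i|} = {k | ∃ i, (L : ℤ) ≤ |k i|} := by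
    ext k; exact hout k
  intro m
  induction m with
  | zero =>
      constructor
      · show A \ _ = g ⁻¹' (A \ _)
        rw [Set.preimage_diff, hA, houtset]
      · show B ∪ _ = g ⁻¹' (B ∪ _)
        rw [Set.preimage_union, hB, houtset]
  | succ m ih =>
      rw [trunc_succ, trunc_succ]
      have htwo : {k | (w' (m+1)).o3 k = true ∨
            ∃ i ∈ (compEtaTrunc d L w' A B m).2, nbr i k ∧ (w' (m+1)).o2 i k = true}
          ∪ {k : Fin d → ℤ | ∃ i, (L : ℤ) ≤ |k i|}
          = g ⁻¹' ({k | (w (m+1)).o3 k = true ∨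
            ∃ i ∈ (compEtaTrunc d L w A B m).2, nbr i k ∧ (w (m+1)).o2 i k = true}
          ∪ {k : Fin d → ℤ | ∃ i, (L : ℤ) ≤ |k i|}) := by
        ext k
        simp only [Set.mem_union, Set.mem_setOf_eq, Set.mem_preimage, ih.2, h2, h3]
        constructor
        · rintro ((hk | ⟨i, hi, hnb, ho⟩) | hk)
          · exact Or.inl (Or.inl hk)
          · exact Or.inl (Or.inr ⟨g i, hi, (hnbr i k).2 hnb, ho⟩)
          · exact Or.inr ((hout k).2 hk)
        · rintro ((hk | ⟨j, hj, hnb, ho⟩) | hk)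
          · exact Or.inl (Or.inl hk)
          · refine Or.inl (Or.inr ⟨g j, ?_, ?_, ?_⟩)
            · show g (g j) ∈ _; rw [hg j]; exact hj
            · have := (hnbr (g j) k).1
              rw [hg j] at this
              exact (hnbr (g j) k).mp (by rw [hg j]; exact hnb)
            · show (w (m+1)).o2 (g (g j)) (g k) = true; rw [hg j]; exact ho
          · exact Or.inr ((hout k).1 hk)
      constructor
      · ext k
        simp only [Set.mem_setOf_eq, Set.mem_preimage, htwo, ih.1, h1]
        constructor
        · rintro ⟨hk1, i, hi, hnb, ho⟩
          exact ⟨hk1, g i, hi, (hnbr i k).2 hnb, ho⟩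
        · rintro ⟨hk1, j, hj, hnb, ho⟩
          refine ⟨hk1, g j, ?_, ?_, ?_⟩
          · show g (g j) ∈ _; rw [hg j]; exact hj
          · exact (hnbr (g j) k).mp (by rw [hg j]; exact hnb)
          · show (w (m+1)).o1 (g (g j)) (g k) = true; rw [hg j]; exact ho
      · exact htwo

lemma trunc_local (t : ℕ) (hA : A ⊆ {k | ∀ j, |k j| ≤ (L : ℤ)})
    (h1 : ∀ m x y, m ≤ t → (∀ j, |x j| ≤ (L : ℤ) + 1) → (∀ j, |y j| ≤ (L : ℤ) + 1) →
      (w m).o1 x y = (w' m).o1 x y)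
    (h2 : ∀ m x y, m ≤ t → (∀ j, |x j| ≤ (L : ℤ) + 1) → (∀ j, |y j| ≤ (L : ℤ) + 1) →
      (w m).o2 x y = (w' m).o2 x y)
    (h3 : ∀ m x, m ≤ t → (∀ j, |x j| ≤ (L : ℤ) + 1) → (w m).o3 x = (w' m).o3 x) :
    ∀ m, m ≤ t → (compEtaTrunc d L w A B m).1 = (compEtaTrunc d L w' A B m).1 ∧
      (compEtaTrunc d L w A B m).2 ∩ {k | ∀ j, |k j| < (L : ℤ)}
        = (compEtaTrunc d L w' A B m).2 ∩ {k | ∀ j, |k j| < (L : ℤ)} := by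
  have hone : ∀ (v : ℕ → CompStep d) m, (compEtaTrunc d L v A B m).1 ⊆ {k | ∀ j, |k j| ≤ (L : ℤ)} := by
    intro v m
    cases m with
    | zero => exact fun k hk => hA hk.1
    | succ m =>
        rintro k ⟨hk1, -⟩
        intro j
        by_contra hj
        exact hk1 (Or.inr ⟨j, le_of_not_ge hj⟩)
  intro m
  induction m with
  | zero => exact fun _ => ⟨rfl, rfl⟩
  | succ m ih =>
      intro hm
      have hm' : m ≤ t := Nat.le_of_succ_le hm
      obtain ⟨ih1, ih2⟩ := ih hm'
      rw [trunc_succ, trunc_succ]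
      -- the two sets agree inside the open box
      have htwo : ∀ k : Fin d → ℤ, (∀ j, |k j| < (L : ℤ)) →
          (((w (m+1)).o3 k = true ∨
            ∃ i ∈ (compEtaTrunc d L w A B m).2, nbr i k ∧ (w (m+1)).o2 i k = true)
          ↔ ((w' (m+1)).o3 k = true ∨
            ∃ i ∈ (compEtaTrunc d L w' A B m).2, nbr i k ∧ (w' (m+1)).o2 i k = true)) := by
        intro k hk
        have hkJ : ∀ j, |k j| ≤ (L : ℤ) + 1 := fun j => le_trans (le_of_lt (hk j)) (by linarith)
        have hiJ : ∀ i : Fin d → ℤ, nbr i k → ∀ j, |i j| ≤ (L : ℤ) + 1 := by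
          intro i hnb j
          have h := nbr_abs_le hnb j
          have := abs_sub_abs_le_abs_sub (i j) (k j)
          have := le_of_lt (hk j)
          linarith [abs_sub_abs_le_abs_sub (i j) (k j), nbr_abs_le hnb j]
        have hmem2 : ∀ i : Fin d → ℤ, nbr i k →
            (i ∈ (compEtaTrunc d L w A B m).2 ↔ i ∈ (compEtaTrunc d L w' A B m).2) := by
          intro i hnb
          by_cases hiout : ∃ j, (L : ℤ) ≤ |i j|
          · exact ⟨fun _ => out_sub_two L w' A B m hiout, fun _ => out_sub_two L w A B m hiout⟩
          · push_neg at hiout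
            have hiin : i ∈ {k : Fin d → ℤ | ∀ j, |k j| < (L : ℤ)} := hiout
            constructor
            · intro h; exact ((Set.ext_iff.1 ih2 i).1 ⟨h, hiin⟩).1
            · intro h; exact ((Set.ext_iff.1 ih2.symm i).1 ⟨h, hiin⟩).1
        rw [h3 (m+1) k hm hkJ]
        constructor
        · rintro (hk3 | ⟨i, hi, hnb, ho⟩)
          · exact Or.inl hk3
          · refine Or.inr ⟨i, (hmem2 i hnb).1 hi, hnb, ?_⟩
            rw [← h2 (m+1) i k hm (hiJ i hnb) hkJ]; exact ho
        · rintro (hk3 | ⟨i, hi, hnb, ho⟩)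
          · exact Or.inl hk3
          · refine Or.inr ⟨i, (hmem2 i hnb).2 hi, hnb, ?_⟩
            rw [h2 (m+1) i k hm (hiJ i hnb) hkJ]; exact ho
      constructor
      · ext k
        simp only [Set.mem_setOf_eq, Set.mem_union]
        constructor
        · rintro ⟨hk1, i, hi, hnb, ho⟩
          have hkin : ∀ j, |k j| < (L : ℤ) := by
            intro j; by_contra hj
            exact hk1 (Or.inr ⟨j, le_of_not_gt hj⟩)
          have hkJ : ∀ j, |k j| ≤ (L : ℤ) + 1 := fun j => le_trans (le_of_lt (hkin j)) (by linarith)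
          have hiJ : ∀ j, |i j| ≤ (L : ℤ) + 1 := by
            intro j
            have := hone w m hi j
            linarith
          refine ⟨?_, i, ih1 ▸ hi, hnb, by rw [← h1 (m+1) i k hm hiJ hkJ]; exact ho⟩
          rintro (hk2 | hk2)
          · exact hk1 (Or.inl ((htwo k hkin).2 hk2))
          · exact hk1 (Or.inr hk2)
        · rintro ⟨hk1, i, hi, hnb, ho⟩
          have hkin : ∀ j, |k j| < (L : ℤ) := by
            intro j; by_contra hj
            exact hk1 (Or.inr ⟨j, le_of_not_gt hj⟩)
          have hkJ : ∀ j, |k j| ≤ (L : ℤ) + 1 := fun j => le_trans (le_of_lt (hkin j)) (by linarith)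
          have hiJ : ∀ j, |i j| ≤ (L : ℤ) + 1 := by
            intro j
            have := hone w' m hi j
            linarith
          refine ⟨?_, i, ih1.symm ▸ hi, hnb, by rw [h1 (m+1) i k hm hiJ hkJ]; exact ho⟩
          rintro (hk2 | hk2)
          · exact hk1 (Or.inl ((htwo k hkin).1 hk2))
          · exact hk1 (Or.inr hk2)
      · ext k
        simp only [Set.mem_inter_iff, Set.mem_union, Set.mem_setOf_eq]
        constructor
        · rintro ⟨hk1 | hk1, hk2⟩
          · exact ⟨Or.inl ((htwo k hk2).1 hk1), hk2⟩
          · exact ⟨Or.inr hk1, hk2⟩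
        · rintro ⟨hk1 | hk1, hk2⟩
          · exact ⟨Or.inl ((htwo k hk2).2 hk1), hk2⟩
          · exact ⟨Or.inr hk1, hk2⟩

end Det


section Sfl
variable {d : ℕ}

/-- sign flip of coordinates -/
def sfl (s : Fin d → Bool) (k : Fin d → ℤ) : Fin d → ℤ := fun i => if s i then -k i else k i

lemma sfl_invol (s : Fin d → Bool) : Function.Involutive (sfl s) := by
  intro k; funext i; by_cases h : s i <;> simp [sfl, h]

lemma abs_sfl (s : Fin d → Bool) (k : Fin d → ℤ) (i : Fin d) : |sfl s k i| = |k i| := by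
  by_cases h : s i <;> simp [sfl, h]

lemma nbr_sfl (s : Fin d → Bool) (x y : Fin d → ℤ) : nbr (sfl s x) (sfl s y) ↔ nbr x y := by
  unfold nbr
  have : ∀ i, |sfl s x i - sfl s y i| = |x i - y i| := by
    intro i
    by_cases h : s i
    · simp only [sfl, h, if_true]
      rw [show -x i - -y i = -(x i - y i) by ring, abs_neg]
    · simp [sfl, h]
  rw [Finset.sum_congr rfl fun i _ => this i]

/-- induced sign flip on the index set -/
def sflIdx (s : Fin d → Bool) : CompIdx d → CompIdx d
  | .inl (m, x, y) => .inl (m, sfl s x, sfl s y)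
  | .inr (.inl (m, x, y)) => .inr (.inl (m, sfl s x, sfl s y))
  | .inr (.inr (m, x)) => .inr (.inr (m, sfl s x))

lemma sflIdx_invol (s : Fin d → Bool) : Function.Involutive (sflIdx s) := by
  rintro (⟨m, x, y⟩ | ⟨m, x, y⟩ | ⟨m, x⟩)
  · simp [sflIdx, sfl_invol s x, sfl_invol s y]
  · simp [sflIdx, sfl_invol s x, sfl_invol s y]
  · simp [sflIdx, sfl_invol s x]

/-- reconstruct a driving environment from a full assignment of bits -/
def wOf {d : ℕ} (a : CompIdx d → Bool) : ℕ → CompStep d := fun m =>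
  ⟨fun x y => a (.inl (m, x, y)), fun x y => a (.inr (.inl (m, x, y))),
    fun x => a (.inr (.inr (m, x)))⟩

end Sfl

section Sset
variable {d : ℕ} (t L : ℕ)

noncomputable def boxJ (d L : ℕ) : Finset (Fin d → ℤ) :=
  Fintype.piFinset fun _ => Finset.Icc (-(L + 1 : ℤ)) (L + 1)

lemma mem_boxJ {x : Fin d → ℤ} : x ∈ boxJ d L ↔ ∀ j, |x j| ≤ (L : ℤ) + 1 := by
  simp [boxJ, Fintype.mem_piFinset, abs_le, and_comm]

open Classical in
noncomputable def Sset (d t L : ℕ) : Finset (CompIdx d) :=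
  ((Finset.range (t+1) ×ˢ boxJ d L ×ˢ boxJ d L).image Sum.inl) ∪
  ((Finset.range (t+1) ×ˢ boxJ d L ×ˢ boxJ d L).image (Sum.inr ∘ Sum.inl)) ∪
  ((Finset.range (t+1) ×ˢ boxJ d L).image (Sum.inr ∘ Sum.inr))

lemma mem_Sset (i : CompIdx d) : i ∈ Sset d t L ↔
    (match i with
     | .inl (m, x, y) => m ≤ t ∧ (∀ j, |x j| ≤ (L : ℤ) + 1) ∧ (∀ j, |y j| ≤ (L : ℤ) + 1)
     | .inr (.inl (m, x, y)) => m ≤ t ∧ (∀ j, |x j| ≤ (L : ℤ) + 1) ∧ (∀ j, |y j| ≤ (L : ℤ) + 1)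
     | .inr (.inr (m, x)) => m ≤ t ∧ (∀ j, |x j| ≤ (L : ℤ) + 1)) := by
  rcases i with ⟨m, x, y⟩ | ⟨m, x, y⟩ | ⟨m, x⟩ <;>
    simp [Sset, Finset.mem_union, Finset.mem_image, Prod.ext_iff, mem_boxJ,
      Nat.lt_succ_iff, eq_comm] <;> aesop

lemma sflIdx_mem_Sset (s : Fin d → Bool) (i : CompIdx d) :
    sflIdx s i ∈ Sset d t L ↔ i ∈ Sset d t L := by
  rcases i with ⟨m, x, y⟩ | ⟨m, x, y⟩ | ⟨m, x⟩ <;>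
    simp only [sflIdx, mem_Sset] <;>
    constructor <;>
    · rintro ⟨h1, h2⟩
      refine ⟨h1, ?_⟩
      simpa [abs_sfl] using h2

lemma map_sflIdx_perm (s : Fin d → Bool) :
    ((Sset d t L).toList.map (sflIdx s)).Perm (Sset d t L).toList := by
  classical
  apply List.perm_of_nodup_nodup_toFinset_eq
  · exact ((Sset d t L).nodup_toList).map ((sflIdx_invol s).injective)
  · exact (Sset d t L).nodup_toList
  · ext i
    simp only [List.mem_toFinset, List.mem_map, Finset.mem_toList]
    constructor
    · rintro ⟨j, hj, rfl⟩
      exact (sflIdx_mem_Sset t L s j).2 hj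
    · intro hi
      exact ⟨sflIdx s i, (sflIdx_mem_Sset t L s i).2 hi, sflIdx_invol s i⟩

end Sset


section Count

lemma encard_le_sum_inter {α κ : Type*} (u : Finset κ) (O : κ → Set α) :
    ∀ X : Set α, X ⊆ (⋃ s ∈ u, O s) → X.encard ≤ ∑ s ∈ u, (X ∩ O s).encard := by
  classical
  induction u using Finset.induction_on with
  | empty =>
      intro X hX
      simp only [Finset.notMem_empty, Set.iUnion_of_empty, Set.iUnion_empty,
        Set.subset_empty_iff] at hX
      simp [hX]
  | insert a u ha ih =>
      intro X hX
      rw [Finset.sum_insert ha]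
      have hsub : X \ O a ⊆ ⋃ s ∈ u, O s := by
        intro k hk
        have := hX hk.1
        rcases Set.mem_iUnion₂.1 this with ⟨s, hs, hks⟩
        rcases Finset.mem_insert.1 hs with rfl | hs
        · exact absurd hks hk.2
        · exact Set.mem_biUnion hs hks
      calc X.encard ≤ (X ∩ O a).encard + (X \ O a).encard := by
            conv_lhs => rw [← Set.inter_union_diff X (O a)]
            exact Set.encard_union_le _ _
      _ ≤ (X ∩ O a).encard + ∑ s ∈ u, ((X \ O a) ∩ O s).encard :=
            add_le_add_right (ih _ hsub) _
      _ ≤ (X ∩ O a).encard + ∑ s ∈ u, (X ∩ O s).encard := by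
            refine add_le_add_right (Finset.sum_le_sum fun s _ => ?_) _
            exact Set.encard_mono fun k hk => ⟨hk.1.1, hk.2⟩

lemma sfl_const_false {d : ℕ} (k : Fin d → ℤ) : sfl (fun _ => false) k = k :=
  funext fun i => by simp [sfl]

lemma cover_box {d : ℕ} (L : ℕ) (k : Fin d → ℤ) (hk : ∀ j, |k j| < (L : ℤ)) :
    ∃ s : Fin d → Bool, ∀ i, 0 ≤ sfl s k i ∧ sfl s k i < (L : ℤ) := by
  refine ⟨fun i => decide (k i < 0), fun i => ?_⟩
  have h := abs_lt.1 (hk i)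
  unfold sfl
  by_cases hi : k i < 0
  · rw [if_pos (by simpa using hi)]
    constructor <;> omega
  · rw [if_neg (by simpa using hi)]
    constructor <;> omega

end Count

/-- Orthant square-root trick: for the truncated competition process started from the full
cube `[-n,n]^d` of 1's, for all positive `n, N, t` and `L ≥ n`,
`P(|_Lη₁ᵗ ∩ [0,L)^d| ≤ N)^{2^d} ≤ P(|_Lη₁ᵗ| ≤ N·2^d)`. -/
theorem stmt15 {Ω : Type*} [MeasurableSpace Ω] (μ : Measure Ω) [IsProbabilityMeasure μ]
    (d : ℕ) (hd : 1 ≤ d) (env : Ω → ℕ → CompStep d)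
    (henv : ∀ n, Measurable (fun ω => env ω n))
    (p q α : ℝ) (hp0 : 0 < p) (hp1 : p < 1) (hq0 : 0 ≤ q) (hq1 : q ≤ 1)
    (hα0 : 0 ≤ α) (hα1 : α ≤ 1)
    (hlaw : CompLaw μ env p q α)
    (n N t L : ℕ) (hn : 1 ≤ n) (hN : 1 ≤ N) (ht : 1 ≤ t) (hL : n ≤ L) :
    μ {ω | ((compEtaTrunc d L (env ω)
          {k : Fin d → ℤ | ∀ i, |k i| ≤ (n : ℤ)}
          {k : Fin d → ℤ | ¬ ∀ i, |k i| ≤ (n : ℤ)} t).1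
          ∩ {k : Fin d → ℤ | ∀ i, 0 ≤ k i ∧ k i < (L : ℤ)}).encard ≤ (N : ℕ∞)}
        ^ (2 ^ d)
      ≤ μ {ω | ((compEtaTrunc d L (env ω)
          {k : Fin d → ℤ | ∀ i, |k i| ≤ (n : ℤ)}
          {k : Fin d → ℤ | ¬ ∀ i, |k i| ≤ (n : ℤ)} t).1).encard ≤ ((N * 2 ^ d : ℕ) : ℕ∞)} := by
  classical
  obtain ⟨hind, hP, hQ, hAl⟩ := hlaw
  set X : CompIdx d → Ω → Bool := compVar env with hXdef
  set Acube : Set (Fin d → ℤ) := {k | ∀ i, |k i| ≤ (n : ℤ)} with hAc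
  set Bset : Set (Fin d → ℤ) := {k | ¬ ∀ i, |k i| ≤ (n : ℤ)} with hBs
  set Base : Set (Fin d → ℤ) := {k | ∀ i, 0 ≤ k i ∧ k i < (L : ℤ)} with hBase
  -- measurability of the driving bits
  have hXm : ∀ i, Measurable (X i) := by
    rintro (⟨m, x, y⟩ | ⟨m, x, y⟩ | ⟨m, x⟩)
    · exact (measurable_pi_apply y).comp ((measurable_pi_apply x).comp
        (((comap_measurable (fun c : CompStep d => (c.o1, c.o2, c.o3))).comp (henv m)).fst))
    · exact (measurable_pi_apply y).comp ((measurable_pi_apply x).comp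
        (((comap_measurable (fun c : CompStep d => (c.o1, c.o2, c.o3))).comp (henv m)).snd.fst))
    · exact (measurable_pi_apply x).comp
        (((comap_measurable (fun c : CompStep d => (c.o1, c.o2, c.o3))).comp (henv m)).snd.snd)
  set w : CompIdx d → Bool → ℝ≥0∞ := fun i β => μ (X i ⁻¹' {β}) with hwdef
  have hXuniv : ∀ i : CompIdx d, X i ⁻¹' {false} ∪ X i ⁻¹' {true} = Set.univ := by
    intro i; ext ω
    simp only [Set.mem_union, Set.mem_preimage, Set.mem_singleton_iff, Set.mem_univ, iff_true]
    cases X i ω <;> simp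
  have hwsum : ∀ i, w i false + w i true = 1 := by
    intro i
    have hdisj : Disjoint (X i ⁻¹' {false}) (X i ⁻¹' {true}) :=
      Disjoint.preimage _ (by simp)
    rw [hwdef]
    rw [← measure_union hdisj ((hXm i) (measurableSet_singleton true)), hXuniv i, measure_univ]
  have hwtop : ∀ (i : CompIdx d) (β : Bool), w i β ≠ ⊤ := fun i β => measure_ne_top μ _
  have hpre : ∀ (i : CompIdx d), X i ⁻¹' {true} = {ω | X i ω = true} := by
    intro i; ext ω; simp
  have hws : ∀ (s : Fin d → Bool) (i : CompIdx d), w (sflIdx s i) = w i := by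
    intro s i
    have htrue : w (sflIdx s i) true = w i true := by
      rcases i with ⟨m, x, y⟩ | ⟨m, x, y⟩ | ⟨m, x⟩
      · show μ (X (.inl (m, sfl s x, sfl s y)) ⁻¹' {true}) = μ (X (.inl (m, x, y)) ⁻¹' {true})
        rw [hpre, hpre]
        show μ {ω | (env ω m).o1 (sfl s x) (sfl s y) = true} = μ {ω | (env ω m).o1 x y = true}
        rw [hP m (sfl s x) (sfl s y), hP m x y]
      · show μ (X (.inr (.inl (m, sfl s x, sfl s y))) ⁻¹' {true})
            = μ (X (.inr (.inl (m, x, y))) ⁻¹' {true})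
        rw [hpre, hpre]
        show μ {ω | (env ω m).o2 (sfl s x) (sfl s y) = true} = μ {ω | (env ω m).o2 x y = true}
        rw [hQ m (sfl s x) (sfl s y), hQ m x y]
      · show μ (X (.inr (.inr (m, sfl s x))) ⁻¹' {true}) = μ (X (.inr (.inr (m, x))) ⁻¹' {true})
        rw [hpre, hpre]
        show μ {ω | (env ω m).o3 (sfl s x) = true} = μ {ω | (env ω m).o3 x = true}
        rw [hAl m (sfl s x), hAl m x]
    funext β
    cases β
    · have h1 := hwsum (sflIdx s i)
      have h2 := hwsum i
      rw [htrue] at h1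
      exact WithTop.add_right_cancel (hwtop i true) (h1.trans h2.symm)
    · exact htrue
  have hcyl : ∀ (m : Finset (CompIdx d)) (b : CompIdx d → Bool),
      μ (⋂ i ∈ m, X i ⁻¹' {b i}) = ∏ i ∈ m, μ (X i ⁻¹' {b i}) := by
    intro m b
    exact hind.meas_biInter (fun i _ => ⟨{b i}, MeasurableSpace.measurableSet_top, rfl⟩)
  set l : List (CompIdx d) := (Sset d t L).toList with hldef
  have hmeml : ∀ i : CompIdx d, i ∈ l ↔ i ∈ Sset d t L := fun i => Finset.mem_toList
  set b0 : CompIdx d → Bool := fun _ => false with hb0def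
  set Aev : (Fin d → Bool) → Set (CompIdx d → Bool) := fun s =>
    {a | ((compEtaTrunc d L (wOf a) Acube Bset t).1 ∩ sfl s ⁻¹' Base).encard ≤ (N : ℕ∞)}
    with hAev
  have hAcL : Acube ⊆ {k | ∀ j, |k j| ≤ (L : ℤ)} := by
    intro k hk j
    exact le_trans (hk j) (by exact_mod_cast hL)
  have hloc : ∀ x y : CompIdx d → Bool, (∀ i ∈ Sset d t L, x i = y i) →
      (compEtaTrunc d L (wOf x) Acube Bset t).1 = (compEtaTrunc d L (wOf y) Acube Bset t).1 := by
    intro x y hxy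
    exact (trunc_local L (wOf x) (wOf y) Acube Bset t hAcL
      (fun m x' y' hm hx' hy' => hxy _ ((mem_Sset t L (.inl (m, x', y'))).2 ⟨hm, hx', hy'⟩))
      (fun m x' y' hm hx' hy' => hxy _ ((mem_Sset t L (.inr (.inl (m, x', y')))).2 ⟨hm, hx', hy'⟩))
      (fun m x' hm hx' => hxy _ ((mem_Sset t L (.inr (.inr (m, x')))).2 ⟨hm, hx'⟩))
      t le_rfl).1
  have hdep : ∀ (s : Fin d → Bool) (x y : CompIdx d → Bool),
      (∀ i ∈ Sset d t L, x i = y i) → (x ∈ Aev s ↔ y ∈ Aev s) := by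
    intro s x y hxy
    show ((compEtaTrunc d L (wOf x) Acube Bset t).1 ∩ sfl s ⁻¹' Base).encard ≤ (N : ℕ∞)
      ↔ ((compEtaTrunc d L (wOf y) Acube Bset t).1 ∩ sfl s ⁻¹' Base).encard ≤ (N : ℕ∞)
    rw [hloc x y hxy]
  have hnodup : l.Nodup := Finset.nodup_toList _
  have hbridge : ∀ A : Set (CompIdx d → Bool),
      (∀ x y : CompIdx d → Bool, (∀ i ∈ Sset d t L, x i = y i) → (x ∈ A ↔ y ∈ A)) →
      μ {ω | (fun i => X i ω) ∈ A} = ExL w l (ind A) b0 := by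
    intro A hA
    have h := bridge hXm hcyl l hnodup ∅ (by simp) A b0
      (fun x y hxy => hA x y (fun i hi => hxy i (Or.inl ((hmeml i).2 hi))))
    simpa using h
  have hμA : ∀ s, μ {ω | (fun i => X i ω) ∈ Aev s} = ExL w l (ind (Aev s)) b0 :=
    fun s => hbridge (Aev s) (hdep s)
  have hsfl0 : sfl (fun _ : Fin d => false) ⁻¹' Base = Base := by
    have h : sfl (fun _ : Fin d => false) = id := funext sfl_const_false
    rw [h, Set.preimage_id]
  -- symmetry between orthants
  have hindsym : ∀ s : Fin d → Bool,
      ind (Aev s) = fun a => ind (Aev (fun _ => false)) (a ∘ sflIdx s) := by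
    intro s
    funext a
    have heq := trunc_equivar L (wOf a) (wOf (a ∘ sflIdx s)) Acube Bset (sfl s)
      (sfl_invol s) (nbr_sfl s)
      (by ext k; simp only [Set.mem_preimage, hAc, Set.mem_setOf_eq, abs_sfl])
      (by ext k; simp only [Set.mem_preimage, hBs, Set.mem_setOf_eq, abs_sfl])
      (fun k => by
        constructor
        · rintro ⟨i, hi⟩; exact ⟨i, by rwa [abs_sfl] at hi⟩
        · rintro ⟨i, hi⟩; exact ⟨i, by rwa [abs_sfl]⟩)
      (fun m x y => rfl) (fun m x y => rfl) (fun m x => rfl) t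
    have hiff : a ∈ Aev s ↔ (a ∘ sflIdx s) ∈ Aev (fun _ => false) := by
      show ((compEtaTrunc d L (wOf a) Acube Bset t).1 ∩ sfl s ⁻¹' Base).encard ≤ (N : ℕ∞)
        ↔ ((compEtaTrunc d L (wOf (a ∘ sflIdx s)) Acube Bset t).1
            ∩ sfl (fun _ => false) ⁻¹' Base).encard ≤ (N : ℕ∞)
      rw [heq.1, hsfl0]
      have hrw : sfl s ⁻¹' (compEtaTrunc d L (wOf a) Acube Bset t).1 ∩ Base
          = sfl s ⁻¹' ((compEtaTrunc d L (wOf a) Acube Bset t).1 ∩ sfl s ⁻¹' Base) := by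
        rw [Set.preimage_inter, (sfl_invol s).preimage Base]
      rw [hrw, Set.encard_preimage_of_injective_subset_range (sfl_invol s).injective
        (by rw [(sfl_invol s).surjective.range_eq]; exact Set.subset_univ _)]
    show ind (Aev s) a = ind (Aev (fun _ => false)) (a ∘ sflIdx s)
    simp only [ind]
    by_cases h : a ∈ Aev s
    · rw [if_pos h, if_pos (hiff.1 h)]
    · rw [if_neg h, if_neg (fun hc => h (hiff.2 hc))]
  have hsym : ∀ s, ExL w l (ind (Aev s)) b0 = ExL w l (ind (Aev (fun _ => false))) b0 := by
    intro s
    rw [hindsym s, ExL_reindex (sflIdx_invol s) (ind (Aev (fun _ => false))) l b0]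
    have hw' : (fun i => w (sflIdx s i)) = w := funext (hws s)
    have hb0' : b0 ∘ sflIdx s = b0 := rfl
    rw [hw', hb0']
    exact ExL_perm (map_sflIdx_perm t L s) b0
  -- antitonicity in the encoded order
  set ε : CompIdx d → Bool := Sum.elim (fun _ => false) (fun _ => true) with hεdef
  have hanti : ∀ s : Fin d → Bool, ∀ x y : CompIdx d → Bool,
      Rle ε x y → ind (Aev s) y ≤ ind (Aev s) x := by
    intro s x y hR
    have hsub : (compEtaTrunc d L (wOf x) Acube Bset t).1
        ⊆ (compEtaTrunc d L (wOf y) Acube Bset t).1 :=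
      (trunc_mono L (wOf x) (wOf y) Acube Bset
        (fun m x' y' h => by
          have hc := hR (.inl (m, x', y'))
          simp only [hεdef, Sum.elim_inl, Bool.xor_false] at hc
          exact Bool.le_iff_imp.1 hc h)
        (fun m x' y' h => by
          have hc := hR (.inr (.inl (m, x', y')))
          simp only [hεdef, Sum.elim_inr, Bool.xor_true] at hc
          have h' : y (.inr (.inl (m, x', y'))) = true := h
          rw [h'] at hc
          rcases Bool.eq_false_or_eq_true (x (.inr (.inl (m, x', y')))) with hx | hx
          · exact hx
          · rw [hx] at hc; exact absurd hc (by decide))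
        (fun m x' h => by
          have hc := hR (.inr (.inr (m, x')))
          simp only [hεdef, Sum.elim_inr, Bool.xor_true] at hc
          have h' : y (.inr (.inr (m, x'))) = true := h
          rw [h'] at hc
          rcases Bool.eq_false_or_eq_true (x (.inr (.inr (m, x')))) with hx | hx
          · exact hx
          · rw [hx] at hc; exact absurd hc (by decide))
        t).1
    have himp : y ∈ Aev s → x ∈ Aev s := by
      intro hy
      exact le_trans (Set.encard_mono (Set.inter_subset_inter_left _ hsub)) hy
    simp only [ind]
    by_cases hy : y ∈ Aev s
    · rw [if_pos hy, if_pos (himp hy)]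
    · rw [if_neg hy]; exact zero_le
  -- the intersection event
  set ACap : Set (CompIdx d → Bool) := ⋂ s ∈ Finset.univ (α := Fin d → Bool), Aev s with hACap
  have hμcap : μ {ω | (fun i => X i ω) ∈ ACap} = ExL w l (ind ACap) b0 := by
    refine hbridge ACap (fun x y hxy => ?_)
    rw [hACap]
    simp only [Set.mem_iInter]
    exact ⟨fun h s hs => (hdep s x y hxy).1 (h s hs), fun h s hs => (hdep s x y hxy).2 (h s hs)⟩
  have hALE : (∏ s ∈ Finset.univ (α := Fin d → Bool), ExL w l (ind (Aev s)) b0)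
      ≤ ExL w l (ind ACap) b0 := by
    have h := ExL_harris_prod (ε := ε) hwsum Finset.univ (fun s => ind (Aev s)) hanti l b0
    have h2 : (fun a => ∏ s ∈ Finset.univ (α := Fin d → Bool), ind (Aev s) a) = ind ACap := by
      funext a
      rw [hACap, ind_biInter]
    rwa [h2] at h
  -- inclusion of the intersection event in the target event
  have hsubRHS : {ω | (fun i => X i ω) ∈ ACap} ⊆
      {ω | ((compEtaTrunc d L (env ω) Acube Bset t).1).encard ≤ ((N * 2 ^ d : ℕ) : ℕ∞)} := by
    intro ω hω
    rw [hACap] at hω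
    simp only [Set.mem_setOf_eq, Set.mem_iInter] at hω ⊢
    have henv' : wOf (fun i => X i ω) = env ω := funext fun m => rfl
    have hcard : ∀ s : Fin d → Bool,
        ((compEtaTrunc d L (env ω) Acube Bset t).1 ∩ sfl s ⁻¹' Base).encard ≤ (N : ℕ∞) := by
      intro s
      have h := hω s (Finset.mem_univ s)
      rw [show ∀ (a : CompIdx d → Bool) (S : Set (CompIdx d → Bool)), a ∈ S ↔ S a from fun _ _ => Iff.rfl] at h
      show ((compEtaTrunc d L (env ω) Acube Bset t).1 ∩ sfl s ⁻¹' Base).encard ≤ (N : ℕ∞)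
      rw [← henv']
      exact h
    have hYbox : (compEtaTrunc d L (env ω) Acube Bset t).1 ⊆ {k | ∀ j, |k j| < (L : ℤ)} := by
      intro k hk j
      by_contra hj
      have hmem : k ∈ (compEtaTrunc d L (env ω) Acube Bset t).1
          ∩ {k : Fin d → ℤ | ∃ i, (L : ℤ) ≤ |k i|} := ⟨hk, ⟨j, le_of_not_gt hj⟩⟩
      rw [one_not_out L (env ω) Acube Bset t] at hmem
      exact hmem
    have hcover : (compEtaTrunc d L (env ω) Acube Bset t).1
        ⊆ ⋃ s ∈ Finset.univ (α := Fin d → Bool), sfl s ⁻¹' Base := by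
      intro k hk
      obtain ⟨s, hs⟩ := cover_box L k (hYbox hk)
      exact Set.mem_biUnion (Finset.mem_univ s) hs
    calc ((compEtaTrunc d L (env ω) Acube Bset t).1).encard
        ≤ ∑ s ∈ Finset.univ (α := Fin d → Bool),
            ((compEtaTrunc d L (env ω) Acube Bset t).1 ∩ sfl s ⁻¹' Base).encard :=
          encard_le_sum_inter _ _ _ hcover
      _ ≤ ∑ _s ∈ Finset.univ (α := Fin d → Bool), (N : ℕ∞) :=
          Finset.sum_le_sum (fun s _ => hcard s)
      _ = ((N * 2 ^ d : ℕ) : ℕ∞) := by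
          rw [Finset.sum_const, Finset.card_univ, Fintype.card_fun, Fintype.card_bool,
            Fintype.card_fin, nsmul_eq_mul]
          push_cast
          ring
  -- identification of the left event
  have hLHSset : {ω | ((compEtaTrunc d L (env ω) Acube Bset t).1 ∩ Base).encard ≤ (N : ℕ∞)}
      = {ω | (fun i => X i ω) ∈ Aev (fun _ => false)} := by
    ext ω
    simp only [Set.mem_setOf_eq]
    rw [show ∀ (a : CompIdx d → Bool) (S : Set (CompIdx d → Bool)), a ∈ S ↔ S a from fun _ _ => Iff.rfl]
    show ((compEtaTrunc d L (env ω) Acube Bset t).1 ∩ Base).encard ≤ (N : ℕ∞)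
      ↔ ((compEtaTrunc d L (wOf (fun i => X i ω)) Acube Bset t).1
          ∩ sfl (fun _ => false) ⁻¹' Base).encard ≤ (N : ℕ∞)
    rw [show wOf (fun i => X i ω) = env ω from funext fun m => rfl, hsfl0]
  calc μ {ω | ((compEtaTrunc d L (env ω) Acube Bset t).1 ∩ Base).encard ≤ (N : ℕ∞)} ^ (2 ^ d)
      = ∏ s ∈ Finset.univ (α := Fin d → Bool), μ {ω | (fun i => X i ω) ∈ Aev s} := by
        rw [hLHSset]
        rw [Finset.prod_congr rfl (fun s _ => by
          rw [hμA s, hsym s, ← hμA (fun _ => false)])]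
        rw [Finset.prod_const, Finset.card_univ, Fintype.card_fun, Fintype.card_bool,
          Fintype.card_fin]
    _ = ∏ s ∈ Finset.univ (α := Fin d → Bool), ExL w l (ind (Aev s)) b0 :=
        Finset.prod_congr rfl (fun s _ => hμA s)
    _ ≤ ExL w l (ind ACap) b0 := hALE
    _ = μ {ω | (fun i => X i ω) ∈ ACap} := hμcap.symm
    _ ≤ μ {ω | ((compEtaTrunc d L (env ω) Acube Bset t).1).encard ≤ ((N * 2 ^ d : ℕ) : ℕ∞)} :=
        measure_mono hsubRHS
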